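/- Let M ≥ 1. The number of functions f : {1,…,M} → {1,…,M} whose functional graph is connected equals (M−1)! · Σ_{m=0}^{M−1} M^m/m!. Equivalently, the probability that a classical random map consists of a single community is P(1,M) = (M−1)!/M^M · Σ_{m=0}^{M−1} M^m/m!. -/

import Mathlib

set_option linter.unusedSectionVars false
set_option linter.unusedVariables false
set_option maxHeartbeats 1000000

open Function Finset

noncomputable section AuxRandomMap

attribute [local instance] Classical.propDecidable

variable {α : Type*}

/-- `x` eventually reaches the set `S` under iteration of `f`. -/
def Reach (f : α → α) (S : Finset α) (x : α) : Prop := ∃ m, f^[m] x ∈ S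

lemma reach_ind {f : α → α} {S : Finset α} {P : α → Prop}
    (h1 : ∀ x ∈ S, P x) (h2 : ∀ x, x ∉ S → P (f x) → P x) :
    ∀ m x, f^[m] x ∈ S → P x := by
  intro m
  induction m with
  | zero => intro x hx; exact h1 x hx
  | succ m ih =>
    intro x hx
    by_cases hxS : x ∈ S
    · exact h1 x hxS
    · exact h2 x hxS (ih (f x) (by rwa [Function.iterate_succ_apply] at hx))

lemma Reach.shift {f : α → α} {S : Finset α} {x : α} (h : Reach f S (f x)) :
    Reach f S x := by
  obtain ⟨m, hm⟩ := h
  exact ⟨m + 1, by rwa [Function.iterate_succ_apply]⟩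

lemma reach_congr {f g : α → α} {S : Finset α} (h : ∀ x, x ∉ S → f x = g x)
    {x : α} (hx : Reach f S x) : Reach g S x := by
  obtain ⟨m, hm⟩ := hx
  refine reach_ind (P := Reach g S) (fun y hy => ⟨0, hy⟩) ?_ m x hm
  intro y hy hP
  rw [h y hy] at hP
  exact hP.shift

lemma iter_mem {f : α → α} {S : Finset α} (h : ∀ x ∈ S, f x ∈ S) {x : α}
    (hx : x ∈ S) (m : ℕ) : f^[m] x ∈ S := by
  induction m with
  | zero => exact hx
  | succ m ih => rw [Function.iterate_succ_apply']; exact h _ ih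

lemma iter_eq_of_agree {f g : α → α} {S : Finset α} (hag : ∀ x ∈ S, f x = g x)
    (hinv : ∀ x ∈ S, g x ∈ S) {x : α} (hx : x ∈ S) (m : ℕ) :
    f^[m] x = g^[m] x := by
  induction m with
  | zero => rfl
  | succ m ih =>
    rw [Function.iterate_succ_apply', Function.iterate_succ_apply', ih,
      hag _ (iter_mem hinv hx m)]

/-- `x` is a periodic point of `f`. -/
def PerPt (f : α → α) (x : α) : Prop := ∃ p, 0 < p ∧ f^[p] x = x

lemma PerPt.apply {f : α → α} {x : α} (h : PerPt f x) : PerPt f (f x) := by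
  obtain ⟨p, hp, hpx⟩ := h
  exact ⟨p, hp, by rw [← Function.iterate_succ_apply, Function.iterate_succ_apply', hpx]⟩

lemma PerPt.return {f : α → α} {x : α} (h : PerPt f x) (b : ℕ) :
    ∃ c, f^[c] (f^[b] x) = x := by
  obtain ⟨p, hp, hpx⟩ := h
  refine ⟨p * (b + 1) - b, ?_⟩
  rw [← Function.iterate_add_apply]
  have hb : p * (b + 1) - b + b = p * (b + 1) := by
    have : b ≤ p * (b + 1) := by nlinarith
    omega
  rw [hb, Function.iterate_mul]
  exact Function.iterate_fixed hpx (b + 1)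

lemma iterate_mod_of_period {f : α → α} {x : α} {p : ℕ} (hp : 0 < p)
    (hper : f^[p] x = x) (m : ℕ) : f^[m] x = f^[m % p] x := by
  conv_lhs => rw [← Nat.mod_add_div m p]
  rw [Function.iterate_add_apply, Function.iterate_mul,
    Function.iterate_fixed hper (m / p)]

lemma exists_perpt_iterate [Fintype α] (f : α → α) (x : α) :
    ∃ i, PerPt f (f^[i] x) := by
  obtain ⟨i, j, hij, hfij⟩ :=
    Fintype.exists_ne_map_eq_of_card_lt (fun i : Fin (Fintype.card α + 1) => f^[i.1] x)
      (by simp)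
  rcases lt_or_gt_of_ne (show i.1 ≠ j.1 from fun h => hij (Fin.ext h)) with h | h
  · refine ⟨i.1, j.1 - i.1, by omega, ?_⟩
    rw [← Function.iterate_add_apply]
    have : j.1 - i.1 + i.1 = j.1 := by omega
    rw [this, ← hfij]
  · refine ⟨j.1, i.1 - j.1, by omega, ?_⟩
    rw [← Function.iterate_add_apply]
    have : i.1 - j.1 + j.1 = i.1 := by omega
    rw [this, hfij]


def IsForest (S : Finset α) (w : α → α) : Prop :=
  (∀ x ∈ S, w x = x) ∧ ∀ x, Reach w S x

variable [Fintype α] [DecidableEq α]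

def Aset (S : Finset α) (w : α → α) : Finset {x : α // x ∉ S} :=
  Finset.univ.filter (fun b => w b.1 ∈ S)

/-- the induced map on the complement of `S`, fixing points that map into `S` -/
def stepMap (S : Finset α) (w : α → α) : {x : α // x ∉ S} → {x : α // x ∉ S} :=
  fun b => if h : w b.1 ∈ S then b else ⟨w b.1, h⟩

/-- reassemble a map from (values on A into S) and a map on the complement -/
def glueMap (S : Finset α) (A : Finset {x : α // x ∉ S})
    (a : {b : {x : α // x ∉ S} // b ∈ A} → {y : α // y ∈ S})
    (w₂ : {x : α // x ∉ S} → {x : α // x ∉ S}) : α → α :=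
  fun x => if hx : x ∈ S then x else
    (if hA : (⟨x, hx⟩ : {x : α // x ∉ S}) ∈ A then (a ⟨⟨x, hx⟩, hA⟩).1
     else (w₂ ⟨x, hx⟩).1)

lemma mem_Aset_iff {S : Finset α} {w : α → α} {b : {x : α // x ∉ S}} :
    b ∈ Aset S w ↔ w b.1 ∈ S := by simp [Aset]

lemma stepMap_pos {S : Finset α} {w : α → α} {b : {x : α // x ∉ S}}
    (h : w b.1 ∈ S) : stepMap S w b = b := dif_pos h

lemma stepMap_neg {S : Finset α} {w : α → α} {b : {x : α // x ∉ S}}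
    (h : w b.1 ∉ S) : stepMap S w b = ⟨w b.1, h⟩ := dif_neg h

lemma glueMap_mem {S : Finset α} {A a w₂} {x : α} (hx : x ∈ S) :
    glueMap S A a w₂ x = x := dif_pos hx

lemma glueMap_A {S : Finset α} {A a w₂} (b : {x : α // x ∉ S}) (hA : b ∈ A) :
    glueMap S A a w₂ b.1 = (a ⟨b, hA⟩).1 := by
  rw [glueMap, dif_neg b.2, dif_pos (show (⟨b.1, b.2⟩ : {x : α // x ∉ S}) ∈ A from hA)]

lemma glueMap_notA {S : Finset α} {A a w₂} (b : {x : α // x ∉ S}) (hA : b ∉ A) :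
    glueMap S A a w₂ b.1 = (w₂ b).1 := by
  rw [glueMap, dif_neg b.2, dif_neg (show ¬(⟨b.1, b.2⟩ : {x : α // x ∉ S}) ∈ A from hA)]

/-- stepMap of a forest map is a forest on `Aset`. -/
lemma stepMap_isForest {S : Finset α} {w : α → α} (hw : IsForest S w) :
    IsForest (Aset S w) (stepMap S w) := by
  constructor
  · intro b hb
    exact stepMap_pos (mem_Aset_iff.1 hb)
  · intro b
    obtain ⟨m, hm⟩ := hw.2 b.1
    have key : ∀ m (x : α) (hx : x ∉ S), w^[m] x ∈ S →
        Reach (stepMap S w) (Aset S w) ⟨x, hx⟩ := by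
      intro m
      induction m with
      | zero => intro x hx h; exact absurd h hx
      | succ m ih =>
        intro x hx h
        by_cases hwx : w x ∈ S
        · exact ⟨0, mem_Aset_iff.2 hwx⟩
        · have h2 := ih (w x) hwx (by rwa [Function.iterate_succ_apply] at h)
          refine Reach.shift ?_
          rw [stepMap_neg hwx]
          exact h2
    exact key m b.1 b.2 hm

lemma glueMap_isForest {S : Finset α} {A : Finset {x : α // x ∉ S}}
    {a : {b : {x : α // x ∉ S} // b ∈ A} → {y : α // y ∈ S}}
    {w₂ : {x : α // x ∉ S} → {x : α // x ∉ S}} (hw₂ : IsForest A w₂) :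
    IsForest S (glueMap S A a w₂) := by
  set w := glueMap S A a w₂ with hwdef
  constructor
  · intro x hx; exact glueMap_mem hx
  · intro x
    by_cases hx : x ∈ S
    · exact ⟨0, hx⟩
    · have key : ∀ (b : {x : α // x ∉ S}), Reach w S b.1 := by
        intro b
        obtain ⟨m, hm⟩ := hw₂.2 b
        refine reach_ind (f := w₂) (S := A) (P := fun b => Reach w S b.1) ?_ ?_ m b hm
        · intro b hb
          refine ⟨1, ?_⟩
          rw [Function.iterate_one, show w b.1 = (a ⟨b, hb⟩).1 from glueMap_A b hb]
          exact (a ⟨b, hb⟩).2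
        · intro b hb hP
          refine Reach.shift ?_
          rw [show w b.1 = (w₂ b).1 from glueMap_notA b hb]
          exact hP
      exact key ⟨x, hx⟩

lemma Aset_glueMap {S : Finset α} {A : Finset {x : α // x ∉ S}}
    {a : {b : {x : α // x ∉ S} // b ∈ A} → {y : α // y ∈ S}}
    {w₂ : {x : α // x ∉ S} → {x : α // x ∉ S}} :
    Aset S (glueMap S A a w₂) = A := by
  ext b
  rw [mem_Aset_iff]
  by_cases hb : b ∈ A
  · rw [glueMap_A b hb]
    simp [(a ⟨b, hb⟩).2, hb]
  · rw [glueMap_notA b hb]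
    simpa [(w₂ b).2] using hb

lemma glueMap_stepMap {S : Finset α} {w : α → α} (hw : IsForest S w)
    {A : Finset {x : α // x ∉ S}} (hA : Aset S w = A)
    (a : {b : {x : α // x ∉ S} // b ∈ A} → {y : α // y ∈ S})
    (ha : ∀ b, (a b).1 = w b.1.1) :
    glueMap S A a (stepMap S w) = w := by
  funext x
  by_cases hx : x ∈ S
  · rw [glueMap_mem hx, hw.1 x hx]
  · by_cases hA2 : (⟨x, hx⟩ : {x : α // x ∉ S}) ∈ A
    · rw [glueMap_A ⟨x, hx⟩ hA2, ha]
    · rw [glueMap_notA ⟨x, hx⟩ hA2, stepMap_neg]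
      rw [← hA, mem_Aset_iff] at hA2
      exact hA2

lemma stepMap_isForest' {S : Finset α} {w : α → α} {A : Finset {x : α // x ∉ S}}
    (hw : IsForest S w) (hA : Aset S w = A) : IsForest A (stepMap S w) :=
  hA ▸ stepMap_isForest hw

def forestFiberEquiv (S : Finset α) (A : Finset {x : α // x ∉ S}) :
    {w : α → α // IsForest S w ∧ Aset S w = A} ≃
      ({b : {x : α // x ∉ S} // b ∈ A} → {y : α // y ∈ S}) ×
        {w₂ : {x : α // x ∉ S} → {x : α // x ∉ S} // IsForest A w₂} where
  toFun := fun w =>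
    ⟨fun b => ⟨w.1 b.1.1, mem_Aset_iff.1 (show b.1 ∈ Aset S w.1 by
        rw [w.2.2]; exact b.2)⟩,
     stepMap S w.1, stepMap_isForest' w.2.1 w.2.2⟩
  invFun := fun p =>
    ⟨glueMap S A p.1 p.2.1, glueMap_isForest p.2.2, Aset_glueMap⟩
  left_inv := by
    intro w
    exact Subtype.ext (glueMap_stepMap w.2.1 w.2.2 _ (fun b => rfl))
  right_inv := by
    rintro ⟨a, w₂, hw₂⟩
    refine Prod.ext ?_ ?_
    · funext b
      refine Subtype.ext ?_
      show glueMap S A a w₂ b.1.1 = _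
      exact glueMap_A b.1 b.2
    · refine Subtype.ext ?_
      funext b
      show stepMap S (glueMap S A a w₂) b = w₂ b
      by_cases hb : b ∈ A
      · rw [show (stepMap S (glueMap S A a w₂)) b = b from
          stepMap_pos (by rw [glueMap_A b hb]; exact (a ⟨b, hb⟩).2)]
        exact (hw₂.1 b hb).symm
      · refine (stepMap_neg ?_).trans ?_
        · rw [glueMap_notA b hb]; exact (w₂ b).2
        · exact Subtype.ext (glueMap_notA b hb)

lemma forest_fiber_card (S : Finset α) (A : Finset {x : α // x ∉ S}) :
    Fintype.card {w : α → α // IsForest S w ∧ Aset S w = A}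
      = S.card ^ A.card *
        Fintype.card {w₂ : {x : α // x ∉ S} → {x : α // x ∉ S} // IsForest A w₂} := by
  rw [Fintype.card_congr (forestFiberEquiv S A), Fintype.card_prod, Fintype.card_fun,
    Fintype.card_coe, Fintype.card_coe]

lemma forest_card_rec (S : Finset α) :
    Fintype.card {w : α → α // IsForest S w}
      = ∑ A ∈ (Finset.univ : Finset {x : α // x ∉ S}).powerset,
          S.card ^ A.card *
            Fintype.card {w₂ : {x : α // x ∉ S} → {x : α // x ∉ S} // IsForest A w₂} := by
  rw [Fintype.card_subtype]
  rw [Finset.card_eq_sum_card_fiberwise (f := Aset S) (t := Finset.univ.powerset)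
    (fun w _ => Finset.mem_powerset.2 (Finset.subset_univ _))]
  refine Finset.sum_congr rfl ?_
  intro A _
  rw [Finset.filter_filter, ← forest_fiber_card S A, Fintype.card_subtype]



lemma binom_aux (m k : ℕ) (hm : 1 ≤ m) :
    (∑ j ∈ Finset.range (m + 1),
      (m.choose j : ℚ) * ((k : ℚ) ^ j * (j * (m : ℚ) ^ m / (m : ℚ) ^ (j + 1))))
      = (k : ℚ) * ((k : ℚ) + (m : ℚ)) ^ (m - 1) := by
  have hm0 : (m : ℚ) ≠ 0 := by positivity  -- wrong: m could be 0? no hm : 1 ≤ m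
  rw [Finset.sum_range_succ']
  simp only [Nat.cast_zero, zero_mul, mul_zero, zero_div, add_zero]
  have hterm : ∀ i ∈ Finset.range m,
      (m.choose (i + 1) : ℚ) * ((k : ℚ) ^ (i + 1) *
        ((i + 1 : ℕ) * (m : ℚ) ^ m / (m : ℚ) ^ (i + 1 + 1)))
      = (k : ℚ) * ((k : ℚ) ^ i * (m : ℚ) ^ (m - 1 - i) * ((m - 1).choose i : ℚ)) := by
    intro i hi
    have hi' : i < m := Finset.mem_range.1 hi
    have hc : (m : ℚ) * ((m - 1).choose i : ℚ) = (m.choose (i + 1) : ℚ) * ((i : ℚ) + 1) := by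
      have h2 := Nat.add_one_mul_choose_eq (m - 1) i
      try simp only [Nat.succ_eq_add_one] at h2
      have h1 : m - 1 + 1 = m := by omega
      rw [h1] at h2
      exact_mod_cast congrArg (Nat.cast (R := ℚ)) h2
    have hpow : (m : ℚ) ^ (m + 1) = (m : ℚ) ^ (i + 1 + 1) * (m : ℚ) ^ (m - 1 - i) := by
      rw [← pow_add]; congr 1; omega
    have hppos : ((m : ℚ) ^ (i + 1 + 1)) ≠ 0 := by positivity
    field_simp
    push_cast
    linear_combination (-((k : ℚ) ^ (i + 1) * (m : ℚ) ^ m)) * hc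
      + ((k : ℚ) ^ (i + 1) * (((m - 1).choose i : ℕ) : ℚ)) * hpow
  rw [Finset.sum_congr rfl hterm]
  rw [← Finset.mul_sum]
  congr 1
  rw [add_pow]
  have : m - 1 + 1 = m := by omega
  rw [this]

theorem forest_count : ∀ (n : ℕ) (α : Type) [Fintype α] [DecidableEq α] (S : Finset α),
    Fintype.card α = n →
    (Fintype.card {w : α → α // IsForest S w} : ℚ) * (n : ℚ) ^ (S.card + 1)
      = (S.card : ℚ) * (n : ℚ) ^ n := by
  intro n
  induction n using Nat.strong_induction_on with
  | _ n IH =>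
  intro α _ _ S hcard
  by_cases hSu : S = Finset.univ
  · subst hSu
    have h1 : Fintype.card {w : α → α // IsForest Finset.univ w} = 1 := by
      rw [Fintype.card_eq_one_iff]
      refine ⟨⟨id, fun x _ => rfl, fun x => ⟨0, Finset.mem_univ x⟩⟩, ?_⟩
      rintro ⟨w, hw⟩
      exact Subtype.ext (funext fun x => hw.1 x (Finset.mem_univ x))
    have hk : (Finset.univ : Finset α).card = n := by rw [Finset.card_univ, hcard]
    rw [h1, hk]
    push_cast
    ring
  by_cases hS0 : S = ∅
  · subst hS0
    have hne : Nonempty α := by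
      by_contra h
      rw [not_nonempty_iff] at h
      exact hSu (Subsingleton.elim _ _)
    obtain ⟨x⟩ := hne
    have h0 : Fintype.card {w : α → α // IsForest (∅ : Finset α) w} = 0 := by
      rw [Fintype.card_eq_zero_iff]
      constructor
      rintro ⟨w, hw⟩
      obtain ⟨mm, hmm⟩ := hw.2 x
      exact absurd hmm (Finset.notMem_empty _)
    rw [h0]
    simp
  · -- main case
    have hk1 : 1 ≤ S.card := Finset.card_pos.2 (Finset.nonempty_iff_ne_empty.2 hS0)
    have hkn : S.card ≤ n := by
      rw [← hcard, ← Finset.card_univ]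
      exact Finset.card_le_univ S
    have hmcard : Fintype.card {x : α // x ∉ S} = n - S.card := by
      have := Fintype.card_subtype_compl (fun x => x ∈ S)
      simpa [Fintype.card_coe] using this.trans (by rw [Fintype.card_coe, hcard])
    have hm1 : 1 ≤ n - S.card := by
      obtain ⟨x, hx⟩ : ∃ x, x ∉ S := by
        by_contra h
        push_neg at h
        exact hSu (Finset.eq_univ_iff_forall.2 h)
      have : 0 < Fintype.card {x : α // x ∉ S} := Fintype.card_pos_iff.2 ⟨⟨x, hx⟩⟩
      omega
    set k := S.card with hkdef
    set m := n - k with hmdef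
    have hkm : k + m = n := by omega
    have hmlt : m < n := by omega
    have hmQ : ((m : ℚ)) ≠ 0 := by
      have : 0 < m := hm1
      positivity
    -- the recurrence, cast to ℚ
    have hrec := forest_card_rec S
    have hrecQ : (Fintype.card {w : α → α // IsForest S w} : ℚ)
        = ∑ A ∈ (Finset.univ : Finset {x : α // x ∉ S}).powerset,
            (k : ℚ) ^ A.card *
              (Fintype.card {w₂ : {x : α // x ∉ S} → {x : α // x ∉ S} // IsForest A w₂} : ℚ) := by
      rw [hrec]
      push_cast
      rfl
    -- apply IH to each A
    have hA : ∀ A : Finset {x : α // x ∉ S},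
        (Fintype.card {w₂ : {x : α // x ∉ S} → {x : α // x ∉ S} // IsForest A w₂} : ℚ)
          = A.card * (m : ℚ) ^ m / (m : ℚ) ^ (A.card + 1) := by
      intro A
      have := IH m hmlt {x : α // x ∉ S} A hmcard
      field_simp
      linarith [this]
    rw [hrecQ]
    calc (∑ A ∈ (Finset.univ : Finset {x : α // x ∉ S}).powerset,
            (k : ℚ) ^ A.card *
              (Fintype.card {w₂ : {x : α // x ∉ S} → {x : α // x ∉ S} // IsForest A w₂} : ℚ))
          * (n : ℚ) ^ (k + 1)
        = (∑ A ∈ (Finset.univ : Finset {x : α // x ∉ S}).powerset,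
            (k : ℚ) ^ A.card * (A.card * (m : ℚ) ^ m / (m : ℚ) ^ (A.card + 1)))
          * (n : ℚ) ^ (k + 1) := by
          congr 1
          exact Finset.sum_congr rfl (fun A _ => by rw [hA A])
      _ = (∑ j ∈ Finset.range (m + 1),
            (m.choose j : ℚ) * ((k : ℚ) ^ j * (j * (m : ℚ) ^ m / (m : ℚ) ^ (j + 1))))
          * (n : ℚ) ^ (k + 1) := by
          congr 1
          rw [Finset.sum_powerset]
          rw [show (Finset.univ : Finset {x : α // x ∉ S}).card = m by
            rw [Finset.card_univ, hmcard]]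
          refine Finset.sum_congr rfl ?_
          intro j hj
          rw [Finset.sum_congr rfl (fun A hA2 => by
            rw [(Finset.mem_powersetCard.1 hA2).2])]
          rw [Finset.sum_const, Finset.card_powersetCard, Finset.card_univ, hmcard]
          simp [mul_comm]
      _ = (k : ℚ) * ((k : ℚ) + (m : ℚ)) ^ (m - 1) * (n : ℚ) ^ (k + 1) := by
          rw [binom_aux m k hm1]
      _ = (k : ℚ) * (n : ℚ) ^ n := by
          have hn : ((k : ℚ) + (m : ℚ)) = (n : ℚ) := by exact_mod_cast hkm
          rw [hn, mul_assoc, ← pow_add]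
          congr 2
          omega


lemma forest_empty_card {α : Type*} [Fintype α] [DecidableEq α] [Nonempty α] :
    Fintype.card {w : α → α // IsForest (∅ : Finset α) w} = 0 := by
  rw [Fintype.card_eq_zero_iff]
  constructor
  rintro ⟨w, hw⟩
  obtain ⟨mm, hmm⟩ := hw.2 (Classical.arbitrary _)
  exact absurd hmm (Finset.notMem_empty _)

def CycOn (Z : Finset α) (σ : α → α) : Prop :=
  (∀ x ∉ Z, σ x = x) ∧ (∀ x ∈ Z, σ x ∈ Z) ∧ ∀ x ∈ Z, ∀ y ∈ Z, ∃ m, σ^[m] x = y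

namespace CycOn

variable {Z : Finset α} {σ : α → α} {z : α}

lemma iter_mem_Z (h : CycOn Z σ) (hz : z ∈ Z) (m : ℕ) : σ^[m] z ∈ Z :=
  iter_mem h.2.1 hz m

lemma exists_period (h : CycOn Z σ) (hz : z ∈ Z) : ∃ q, 0 < q ∧ σ^[q] z = z := by
  obtain ⟨m, hm⟩ := h.2.2 (σ z) (h.2.1 z hz) z hz
  exact ⟨m + 1, Nat.succ_pos m, by rwa [Function.iterate_succ_apply]⟩

/-- minimal period -/
noncomputable def per (h : CycOn Z σ) (hz : z ∈ Z) : ℕ := Nat.find (h.exists_period hz)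

lemma per_pos (h : CycOn Z σ) (hz : z ∈ Z) : 0 < h.per hz :=
  (Nat.find_spec (h.exists_period hz)).1

lemma iter_per (h : CycOn Z σ) (hz : z ∈ Z) : σ^[h.per hz] z = z :=
  (Nat.find_spec (h.exists_period hz)).2

lemma iter_ne_of_lt_per (h : CycOn Z σ) (hz : z ∈ Z) {i j : ℕ} (hij : i < j)
    (hj : j < h.per hz) : σ^[i] z ≠ σ^[j] z := by
  intro heq
  have h1 : σ^[(h.per hz - j) + j] z = z := by
    rw [Nat.sub_add_cancel hj.le]; exact h.iter_per hz
  have h2 : σ^[(h.per hz - j) + i] z = z := by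
    rw [Function.iterate_add_apply, ← heq, ← Function.iterate_add_apply] at h1
    exact h1
  exact Nat.find_min (h.exists_period hz)
    (show h.per hz - j + i < h.per hz by omega) ⟨by omega, h2⟩

lemma exists_lt_per_iter (h : CycOn Z σ) (hz : z ∈ Z) {y : α} (hy : y ∈ Z) :
    ∃ i < h.per hz, σ^[i] z = y := by
  obtain ⟨m, hm⟩ := h.2.2 z hz y hy
  exact ⟨m % h.per hz, Nat.mod_lt _ (h.per_pos hz),
    by rw [← iterate_mod_of_period (h.per_pos hz) (h.iter_per hz)]; exact hm⟩

lemma per_eq_card (h : CycOn Z σ) (hz : z ∈ Z) : h.per hz = Z.card := by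
  have himg : (Finset.range (h.per hz)).image (fun i => σ^[i] z) = Z := by
    apply Finset.Subset.antisymm
    · intro y hy
      obtain ⟨i, _, rfl⟩ := Finset.mem_image.1 hy
      exact h.iter_mem_Z hz i
    · intro y hy
      obtain ⟨i, hi, hiy⟩ := h.exists_lt_per_iter hz hy
      exact Finset.mem_image.2 ⟨i, Finset.mem_range.2 hi, hiy⟩
  have hinj : Set.InjOn (fun i => σ^[i] z) (Finset.range (h.per hz)) := by
    intro i hi j hj hij
    simp only [Finset.coe_range, Set.mem_Iio] at hi hj
    rcases lt_trichotomy i j with hlt | he | hgt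
    · exact absurd hij (h.iter_ne_of_lt_per hz hlt hj)
    · exact he
    · exact absurd hij.symm (h.iter_ne_of_lt_per hz hgt hi)
  have h3 := congrArg Finset.card himg
  rw [Finset.card_image_of_injOn hinj, Finset.card_range] at h3
  exact h3

lemma iter_card (h : CycOn Z σ) (hz : z ∈ Z) : σ^[Z.card] z = z := by
  rw [← h.per_eq_card hz]; exact h.iter_per hz

lemma iter_injective (h : CycOn Z σ) (hz : z ∈ Z) : Function.Injective
    (fun i : Fin Z.card => (⟨σ^[i.1] z, h.iter_mem_Z hz i.1⟩ : {x : α // x ∈ Z})) := by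
  intro i j hij
  have h2 := Subtype.ext_iff.1 hij
  rcases lt_trichotomy i.1 j.1 with hlt | he | hgt
  · exact absurd h2 (h.iter_ne_of_lt_per hz hlt (by rw [h.per_eq_card hz]; exact j.2))
  · exact Fin.ext he
  · exact absurd h2.symm (h.iter_ne_of_lt_per hz hgt (by rw [h.per_eq_card hz]; exact i.2))

end CycOn

variable {Z : Finset α}

def succMap (Z : Finset α) (hpos : 0 < Z.card) (e : Fin Z.card ≃ {x : α // x ∈ Z}) :
    α → α :=
  fun x => if hx : x ∈ Z then
    (e ⟨((e.symm ⟨x, hx⟩).1 + 1) % Z.card, Nat.mod_lt _ hpos⟩).1 else x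

lemma succMap_apply_e (hpos : 0 < Z.card) (e : Fin Z.card ≃ {x : α // x ∈ Z})
    (i : Fin Z.card) :
    succMap Z hpos e (e i).1 = (e ⟨(i.1 + 1) % Z.card, Nat.mod_lt _ hpos⟩).1 := by
  rw [succMap, dif_pos (e i).2]
  simp only [Subtype.coe_eta, Equiv.symm_apply_apply]

lemma succMap_iter (hpos : 0 < Z.card) (e : Fin Z.card ≃ {x : α // x ∈ Z}) (m : ℕ) :
    ∀ i : Fin Z.card, (succMap Z hpos e)^[m] (e i).1
      = (e ⟨(i.1 + m) % Z.card, Nat.mod_lt _ hpos⟩).1 := by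
  induction m with
  | zero =>
    intro i
    simp only [Function.iterate_zero, id_eq]
    have h1 : (⟨(i.1 + 0) % Z.card, Nat.mod_lt _ hpos⟩ : Fin Z.card) = i :=
      Fin.ext (by simp [Nat.mod_eq_of_lt i.2])
    rw [h1]
  | succ m ih =>
    intro i
    rw [Function.iterate_succ_apply, succMap_apply_e hpos e i,
      ih ⟨(i.1 + 1) % Z.card, Nat.mod_lt _ hpos⟩]
    have h1 : (⟨((⟨(i.1 + 1) % Z.card, Nat.mod_lt _ hpos⟩ : Fin Z.card).1 + m) % Z.card,
        Nat.mod_lt _ hpos⟩ : Fin Z.card)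
        = ⟨(i.1 + (m + 1)) % Z.card, Nat.mod_lt _ hpos⟩ := by
      apply Fin.ext
      show ((i.1 + 1) % Z.card + m) % Z.card = (i.1 + (m + 1)) % Z.card
      rw [Nat.mod_add_mod]
      congr 1
      omega
    rw [h1]

lemma succMap_cycOn (hpos : 0 < Z.card) (e : Fin Z.card ≃ {x : α // x ∈ Z}) :
    CycOn Z (succMap Z hpos e) := by
  refine ⟨fun x hx => dif_neg hx, fun x hx => ?_, fun x hx y hy => ?_⟩
  · rw [succMap, dif_pos hx]
    exact (e _).2
  · set i := e.symm ⟨x, hx⟩ with hidef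
    set j := e.symm ⟨y, hy⟩ with hjdef
    refine ⟨j.1 + Z.card - i.1, ?_⟩
    have hx' : x = (e i).1 := by rw [hidef, Equiv.apply_symm_apply]
    rw [hx', succMap_iter]
    have h2 : (⟨(i.1 + (j.1 + Z.card - i.1)) % Z.card, Nat.mod_lt _ hpos⟩ : Fin Z.card)
        = j := by
      apply Fin.ext
      show (i.1 + (j.1 + Z.card - i.1)) % Z.card = j.1
      have hi := i.2
      have hj := j.2
      have h3 : i.1 + (j.1 + Z.card - i.1) = j.1 + Z.card := by omega
      rw [h3, Nat.add_mod_right, Nat.mod_eq_of_lt hj]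
    rw [h2, hjdef, Equiv.apply_symm_apply]

noncomputable def cycEquiv (Z : Finset α) (hpos : 0 < Z.card) :
    {σ : α → α // CycOn Z σ} × {z : α // z ∈ Z} ≃ (Fin Z.card ≃ {x : α // x ∈ Z}) where
  toFun p := Equiv.ofBijective
    (fun i => ⟨p.1.1^[i.1] p.2.1, p.1.2.iter_mem_Z p.2.2 i.1⟩)
    ((Fintype.bijective_iff_injective_and_card _).2
      ⟨p.1.2.iter_injective p.2.2, by simp [Fintype.card_coe]⟩)
  invFun e := ⟨⟨succMap Z hpos e, succMap_cycOn hpos e⟩, e ⟨0, hpos⟩⟩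
  left_inv := by
    rintro ⟨⟨σ, hσ⟩, ⟨z, hz⟩⟩
    have hF : ∀ i : Fin Z.card,
        (Equiv.ofBijective (fun i : Fin Z.card =>
          (⟨σ^[i.1] z, hσ.iter_mem_Z hz i.1⟩ : {x : α // x ∈ Z}))
          ((Fintype.bijective_iff_injective_and_card _).2
            ⟨hσ.iter_injective hz, by simp [Fintype.card_coe]⟩)) i
        = ⟨σ^[i.1] z, hσ.iter_mem_Z hz i.1⟩ := fun i => rfl
    set e := Equiv.ofBijective (fun i : Fin Z.card =>
          (⟨σ^[i.1] z, hσ.iter_mem_Z hz i.1⟩ : {x : α // x ∈ Z}))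
          ((Fintype.bijective_iff_injective_and_card _).2
            ⟨hσ.iter_injective hz, by simp [Fintype.card_coe]⟩) with hedef
    refine Prod.ext (Subtype.ext ?_) (Subtype.ext ?_)
    · show succMap Z hpos e = σ
      funext x
      by_cases hx : x ∈ Z
      · set i := e.symm ⟨x, hx⟩ with hidef
        have hei : e i = ⟨x, hx⟩ := by rw [hidef, Equiv.apply_symm_apply]
        have hxval : x = σ^[i.1] z := by
          have := congrArg Subtype.val ((hF i).symm.trans hei)
          exact this.symm
        have hsm : succMap Z hpos e x = (e ⟨(i.1 + 1) % Z.card, Nat.mod_lt _ hpos⟩).1 := by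
          conv_lhs => rw [show x = (e i).1 from congrArg Subtype.val hei.symm]
          exact succMap_apply_e hpos e i
        rw [hsm, hF]
        show σ^[(i.1 + 1) % Z.card] z = σ x
        rw [hxval, ← Function.iterate_succ_apply' σ i.1 z]
        by_cases hik : i.1 + 1 < Z.card
        · rw [Nat.mod_eq_of_lt hik]
        · have hik2 : i.1 + 1 = Z.card := by have := i.2; omega
          show σ^[(i.1 + 1) % Z.card] z = σ^[i.1 + 1] z
          have h5 : σ^[i.1 + 1] z = z := by rw [hik2]; exact hσ.iter_card hz
          have h6 : (i.1 + 1) % Z.card = 0 := by rw [hik2, Nat.mod_self]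
          rw [h6, Function.iterate_zero_apply, h5]
      · rw [show succMap Z hpos e x = x from dif_neg hx, hσ.1 x hx]
    · show (e ⟨0, hpos⟩).1 = z
      rw [hF]
      rfl
  right_inv := by
    intro e
    apply Equiv.ext
    intro i
    apply Subtype.ext
    show (succMap Z hpos e)^[i.1] (e ⟨0, hpos⟩).1 = (e i).1
    rw [succMap_iter hpos e i.1 ⟨0, hpos⟩]
    congr 2
    apply Fin.ext
    show (0 + i.1) % Z.card = i.1
    rw [Nat.zero_add, Nat.mod_eq_of_lt i.2]

lemma cyc_card_mul (Z : Finset α) (hpos : 0 < Z.card) :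
    Fintype.card {σ : α → α // CycOn Z σ} * Z.card = (Z.card).factorial := by
  have h1 := Fintype.card_congr (cycEquiv Z hpos)
  rw [Fintype.card_prod, Fintype.card_coe] at h1
  rw [h1, Fintype.card_equiv ((Fintype.equivFinOfCardEq (Fintype.card_coe Z)).symm),
    Fintype.card_fin]

def Conn (f : α → α) : Prop := ∀ x y, ∃ m n, f^[m] x = f^[n] y

noncomputable def Zset (f : α → α) : Finset α := Finset.univ.filter (PerPt f)

lemma mem_Zset {f : α → α} {x : α} : x ∈ Zset f ↔ PerPt f x := by
  simp [Zset]

lemma Zset_inv {f : α → α} : ∀ x ∈ Zset f, f x ∈ Zset f := fun x hx =>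
  mem_Zset.2 (PerPt.apply (mem_Zset.1 hx))

lemma reach_Zset (f : α → α) (x : α) : Reach f (Zset f) x := by
  obtain ⟨i, hi⟩ := exists_perpt_iterate f x
  exact ⟨i, mem_Zset.2 hi⟩

def sigmaOf (Z : Finset α) (f : α → α) : α → α := fun x => if x ∈ Z then f x else x
def wOf (Z : Finset α) (f : α → α) : α → α := fun x => if x ∈ Z then x else f x
def glueCyc (Z : Finset α) (σ w : α → α) : α → α := fun x => if x ∈ Z then σ x else w x

variable {Z : Finset α}

lemma sigmaOf_cycOn {f : α → α} (hc : Conn f) (hZ : Zset f = Z) :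
    CycOn Z (sigmaOf Z f) := by
  have hinv : ∀ x ∈ Z, f x ∈ Z := by
    intro x hx
    rw [← hZ] at hx ⊢
    exact Zset_inv x hx
  refine ⟨fun x hx => if_neg hx, fun x hx => ?_, fun x hx y hy => ?_⟩
  · rw [sigmaOf, if_pos hx]
    exact hinv x hx
  · have hy' : PerPt f y := mem_Zset.1 (hZ ▸ hy)
    obtain ⟨a, b, hab⟩ := hc x y
    obtain ⟨c, hcy⟩ := hy'.return b
    refine ⟨c + a, ?_⟩
    rw [iter_eq_of_agree (f := sigmaOf Z f) (g := f) (fun u hu => if_pos hu) hinv hx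
      (c + a), Function.iterate_add_apply, hab, hcy]

lemma wOf_isForest {f : α → α} (hZ : Zset f = Z) : IsForest Z (wOf Z f) := by
  refine ⟨fun x hx => if_pos hx, fun x => ?_⟩
  refine reach_congr (fun u hu => (if_neg hu).symm) (hZ ▸ reach_Zset f x)

lemma glue_sigma_iter {σ w : α → α} (hσ : CycOn Z σ) {x : α} (hx : x ∈ Z) (m : ℕ) :
    (glueCyc Z σ w)^[m] x = σ^[m] x :=
  iter_eq_of_agree (fun u hu => if_pos hu) hσ.2.1 hx m

lemma glue_reach {σ w : α → α} (hw : IsForest Z w) (x : α) :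
    Reach (glueCyc Z σ w) Z x :=
  reach_congr (fun u hu => (if_neg hu).symm) (hw.2 x)

lemma glue_conn {σ w : α → α} (hσ : CycOn Z σ) (hw : IsForest Z w) :
    Conn (glueCyc Z σ w) := by
  intro x y
  obtain ⟨a, ha⟩ := glue_reach (σ := σ) hw x
  obtain ⟨b, hb⟩ := glue_reach (σ := σ) hw y
  obtain ⟨c, hc⟩ := hσ.2.2 _ ha _ hb
  refine ⟨c + a, b, ?_⟩
  rw [Function.iterate_add_apply, glue_sigma_iter hσ ha c, hc]

lemma glue_inv {σ w : α → α} (hσ : CycOn Z σ) :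
    ∀ x ∈ Z, glueCyc Z σ w x ∈ Z := by
  intro x hx
  rw [glueCyc]
  simp only [if_pos hx]
  exact hσ.2.1 x hx

lemma glue_Zset {σ w : α → α} (hσ : CycOn Z σ) (hw : IsForest Z w) :
    Zset (glueCyc Z σ w) = Z := by
  ext u
  rw [mem_Zset]
  constructor
  · rintro ⟨p, hp, hpu⟩
    by_contra hu
    obtain ⟨t, ht⟩ := glue_reach (σ := σ) hw u
    have h2 : (glueCyc Z σ w)^[p * (t + 1)] u = u := by
      rw [Function.iterate_mul]
      exact Function.iterate_fixed hpu (t + 1)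
    have h3 : p * (t + 1) - t + t = p * (t + 1) := by
      have : t + 1 ≤ p * (t + 1) := Nat.le_mul_of_pos_left _ hp
      omega
    have h4 : (glueCyc Z σ w)^[p * (t + 1) - t] ((glueCyc Z σ w)^[t] u) = u := by
      rw [← Function.iterate_add_apply, h3]
      exact h2
    have h5 := iter_mem (glue_inv (w := w) hσ) ht (p * (t + 1) - t)
    rw [h4] at h5
    exact hu h5
  · intro hu
    obtain ⟨c, hc⟩ := hσ.2.2 (σ u) (hσ.2.1 u hu) u hu
    refine ⟨c + 1, Nat.succ_pos c, ?_⟩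
    rw [glue_sigma_iter hσ hu (c + 1), Function.iterate_succ_apply]
    exact hc

noncomputable def connFiberEquiv (Z : Finset α) :
    {f : α → α // Conn f ∧ Zset f = Z} ≃
      ({σ : α → α // CycOn Z σ} × {w : α → α // IsForest Z w}) where
  toFun f := (⟨sigmaOf Z f.1, sigmaOf_cycOn f.2.1 f.2.2⟩,
              ⟨wOf Z f.1, wOf_isForest f.2.2⟩)
  invFun p := ⟨glueCyc Z p.1.1 p.2.1, glue_conn p.1.2 p.2.2, glue_Zset p.1.2 p.2.2⟩
  left_inv := by
    intro f
    apply Subtype.ext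
    funext x
    show glueCyc Z (sigmaOf Z f.1) (wOf Z f.1) x = f.1 x
    by_cases hx : x ∈ Z
    · rw [glueCyc]; simp only [if_pos hx]; rw [sigmaOf]; simp only [if_pos hx]
    · rw [glueCyc]; simp only [if_neg hx]; rw [wOf]; simp only [if_neg hx]
  right_inv := by
    rintro ⟨⟨σ, hσ⟩, ⟨w, hw⟩⟩
    refine Prod.ext (Subtype.ext ?_) (Subtype.ext ?_)
    · show sigmaOf Z (glueCyc Z σ w) = σ
      funext x
      by_cases hx : x ∈ Z
      · rw [sigmaOf]; simp only [if_pos hx]; rw [glueCyc]; simp only [if_pos hx]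
      · rw [sigmaOf]; simp only [if_neg hx]; exact (hσ.1 x hx).symm
    · show wOf Z (glueCyc Z σ w) = w
      funext x
      by_cases hx : x ∈ Z
      · rw [wOf]; simp only [if_pos hx]; exact (hw.1 x hx).symm
      · rw [wOf]; simp only [if_neg hx]; rw [glueCyc]; simp only [if_neg hx]

lemma conn_fiber_card (Z : Finset α) :
    Fintype.card {f : α → α // Conn f ∧ Zset f = Z}
      = Fintype.card {σ : α → α // CycOn Z σ} *
        Fintype.card {w : α → α // IsForest Z w} := by
  rw [Fintype.card_congr (connFiberEquiv Z), Fintype.card_prod]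

lemma conn_card_sum :
    Fintype.card {f : α → α // Conn f}
      = ∑ Z ∈ (Finset.univ : Finset α).powerset,
          Fintype.card {σ : α → α // CycOn Z σ} *
            Fintype.card {w : α → α // IsForest Z w} := by
  rw [Fintype.card_subtype]
  rw [Finset.card_eq_sum_card_fiberwise (f := Zset) (t := Finset.univ.powerset)
    (fun f _ => Finset.mem_powerset.2 (Finset.subset_univ _))]
  refine Finset.sum_congr rfl ?_
  intro Z _
  rw [Finset.filter_filter, ← conn_fiber_card Z, Fintype.card_subtype]

/-- The number of functions `f : Fin M → Fin M` whose functional graph is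
connected (for all `x y` there are `m n` with `f^[m] x = f^[n] y`) equals
`(M-1)! * ∑_{m=0}^{M-1} M^m / m!`. -/
theorem stmt2 (M : ℕ) (hM : 1 ≤ M) :
    (Set.ncard {f : Fin M → Fin M |
        ∀ x y : Fin M, ∃ m n : ℕ, f^[m] x = f^[n] y} : ℚ)
      = (Nat.factorial (M - 1)) *
          ∑ m ∈ Finset.range M, (M : ℚ) ^ m / (Nat.factorial m) := by
  have hMQ : (M : ℚ) ≠ 0 := by positivity
  have hMne : Nonempty (Fin M) := ⟨⟨0, hM⟩⟩
  -- step 1 : ncard to Fintype.card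
  have h1 : Set.ncard {f : Fin M → Fin M | ∀ x y : Fin M, ∃ m n : ℕ, f^[m] x = f^[n] y}
      = Fintype.card {f : Fin M → Fin M // Conn f} := by
    rw [Set.ncard_eq_toFinset_card', Set.toFinset_setOf, Fintype.card_subtype]
    exact congrArg Finset.card (Finset.filter_congr (fun f _ => Iff.rfl))
  rw [h1, conn_card_sum]
  push_cast
  -- step 2 : termwise values
  have hterm : ∀ Z : Finset (Fin M),
      (Fintype.card {σ : Fin M → Fin M // CycOn Z σ} : ℚ) *
        (Fintype.card {w : Fin M → Fin M // IsForest Z w} : ℚ)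
      = if Z.card = 0 then 0
        else (Z.card.factorial : ℚ) * (M : ℚ) ^ (M - Z.card) / M := by
    intro Z
    by_cases h0 : Z.card = 0
    · rw [if_pos h0, Finset.card_eq_zero.1 h0, forest_empty_card]
      simp
    · rw [if_neg h0]
      have hk : 0 < Z.card := Nat.pos_of_ne_zero h0
      have hkM : Z.card ≤ M := by
        have := Finset.card_le_univ Z
        simpa using this
      have hkQ : (Z.card : ℚ) ≠ 0 := by positivity
      have hcyc := cyc_card_mul Z hk
      have hfor := forest_count M (Fin M) Z (by simp)
      have hc1 : (Fintype.card {σ : Fin M → Fin M // CycOn Z σ} : ℚ)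
          = (Z.card.factorial : ℚ) / Z.card := by
        rw [eq_div_iff hkQ]
        exact_mod_cast hcyc
      have hc2 : (Fintype.card {w : Fin M → Fin M // IsForest Z w} : ℚ)
          = Z.card * (M : ℚ) ^ M / (M : ℚ) ^ (Z.card + 1) := by
        rw [eq_div_iff (pow_ne_zero _ hMQ)]
        exact hfor
      have hpow : (M : ℚ) ^ M = (M : ℚ) ^ (M - Z.card) * (M : ℚ) ^ Z.card := by
        rw [← pow_add]
        congr 1
        omega
      rw [hc1, hc2, hpow, pow_succ]
      field_simp
  rw [Finset.sum_congr rfl (fun Z _ => hterm Z)]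
  -- step 3 : group by cardinality
  rw [Finset.sum_powerset]
  have hcard_univ : (Finset.univ : Finset (Fin M)).card = M := by simp
  rw [hcard_univ]
  have hgroup : ∀ j ∈ Finset.range (M + 1),
      (∑ Z ∈ Finset.powersetCard j (Finset.univ : Finset (Fin M)),
        if Z.card = 0 then (0 : ℚ)
        else (Z.card.factorial : ℚ) * (M : ℚ) ^ (M - Z.card) / M)
      = (M.choose j : ℚ) * (if j = 0 then 0
          else (j.factorial : ℚ) * (M : ℚ) ^ (M - j) / M) := by
    intro j _
    rw [Finset.sum_congr rfl (fun Z hZ => by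
      rw [(Finset.mem_powersetCard.1 hZ).2])]
    rw [Finset.sum_const, Finset.card_powersetCard, hcard_univ, nsmul_eq_mul]
  rw [Finset.sum_congr rfl hgroup]
  -- step 4 : kill j = 0 and reindex
  rw [Finset.sum_range_succ']
  simp only [eq_self_iff_true, if_true, mul_zero, add_zero]
  have hne : ∀ i ∈ Finset.range M,
      (M.choose (i + 1) : ℚ) * (if i + 1 = 0 then 0
        else ((i + 1).factorial : ℚ) * (M : ℚ) ^ (M - (i + 1)) / M)
      = (((M - 1).factorial : ℚ) / (M - 1 - i).factorial) * (M : ℚ) ^ (M - 1 - i) := by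
    intro i hi
    have hiM : i < M := Finset.mem_range.1 hi
    rw [if_neg (Nat.succ_ne_zero i)]
    have hkey : (M.choose (i + 1) : ℚ) * ((i + 1).factorial : ℚ) / M
        = ((M - 1).factorial : ℚ) / (M - 1 - i).factorial := by
      have hnat := Nat.choose_mul_factorial_mul_factorial (show i + 1 ≤ M by omega)
      have hfac : (M.factorial : ℚ) = M * (M - 1).factorial := by
        have : M = (M - 1) + 1 := by omega
        rw [this]
        push_cast [Nat.factorial_succ]
        ring_nf
      have hnatQ : (M.choose (i + 1) : ℚ) * ((i + 1).factorial : ℚ)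
          * ((M - (i + 1)).factorial : ℚ) = (M.factorial : ℚ) := by
        exact_mod_cast congrArg (Nat.cast (R := ℚ)) hnat
      have hfne : ((M - (i + 1)).factorial : ℚ) ≠ 0 := by
        exact_mod_cast Nat.factorial_ne_zero _
      have hsub : M - (i + 1) = M - 1 - i := by omega
      rw [hsub] at hnatQ
      rw [div_eq_div_iff hMQ (by exact_mod_cast Nat.factorial_ne_zero (M - 1 - i))]
      rw [← hnatQ] at hfac
      linear_combination hfac
    have hexp : M - (i + 1) = M - 1 - i := by omega
    rw [hexp]
    linear_combination ((M : ℚ) ^ (M - 1 - i)) * hkey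
  rw [Finset.sum_congr rfl hne]
  -- step 5 : match with the target via reflection
  rw [show ((M - 1).factorial : ℚ) * ∑ m ∈ Finset.range M, (M : ℚ) ^ m / (m.factorial : ℚ)
      = ∑ m ∈ Finset.range M, ((M - 1).factorial : ℚ) / (m.factorial : ℚ) * (M : ℚ) ^ m by
    rw [Finset.mul_sum]
    exact Finset.sum_congr rfl (fun m _ => by ring)]
  rw [← Finset.sum_range_reflect (fun m => ((M - 1).factorial : ℚ) / (m.factorial : ℚ)
      * (M : ℚ) ^ m) M]

end AuxRandomMap
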